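/- For λ → 0⁺, the implicit relation θ = 1/2 - (λ/√(1-4λ))·log((1+√(1-4λ))/(1-√(1-4λ))) admits the expansion 1/2 - θ = -λ·log λ - 2λ²(1 + log λ) + O(λ³ log λ). -/
import Mathlib


open Filter Asymptotics

set_option maxHeartbeats 2000000 in
/-- As `λ → 0⁺`, with `θ(λ) = 1/2 - (λ/√(1-4λ))·log((1+√(1-4λ))/(1-√(1-4λ)))`, we have
`1/2 - θ(λ) = -λ log λ - 2λ²(1 + log λ) + O(λ³ log λ)`. -/
theorem stmt_15 :
    (fun l : ℝ =>
        (1 / 2 - (1 / 2 - (l / Real.sqrt (1 - 4 * l)) *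
          Real.log ((1 + Real.sqrt (1 - 4 * l)) / (1 - Real.sqrt (1 - 4 * l))))) -
        (-l * Real.log l - 2 * l ^ 2 * (1 + Real.log l)))
      =O[nhdsWithin 0 (Set.Ioi 0)] fun l : ℝ => l ^ 3 * Real.log l := by
  rw [isBigO_iff]
  refine ⟨50, ?_⟩
  filter_upwards [Ioo_mem_nhdsGT_of_mem (by norm_num : (0:ℝ) ∈ Set.Ico 0 (1/8))] with l hl
  obtain ⟨hl0, hl8⟩ := hl
  have hl8' : l ≤ 1/8 := le_of_lt hl8
  beta_reduce
  set s := Real.sqrt (1 - 4 * l) with hs_def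
  have h4 : (0:ℝ) < 1 - 4*l := by linarith
  have hs2 : s^2 = 1 - 4*l := Real.sq_sqrt h4.le
  have hs0 : 0 < s := Real.sqrt_pos.mpr h4
  clear_value s
  have hs7 : (0.7:ℝ) ≤ s := by nlinarith
  have hs1 : s < 1 := by nlinarith
  set t := (1 - s)/2 with ht_def
  clear_value t
  have ht0 : 0 < t := by rw [ht_def]; linarith
  have ht015 : t ≤ 0.15 := by rw [ht_def]; linarith
  have hlt : l = t*(1-t) := by rw [ht_def]; linear_combination ((1:ℝ)/4) * hs2
  have ht2l : t ≤ 2*l := by nlinarith [hlt, ht015, ht0]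
  have h1t : (0:ℝ) < 1 - t := by linarith
  have hseq : s = 1 - 2*t := by rw [ht_def]; ring
  set L := Real.log (1 - t) with hL_def
  clear_value L
  set X := Real.log l with hX_def
  clear_value X
  -- log identity
  have hratio : (1+s)/(1-s) = (1-t)^2 / l := by
    rw [hseq, hlt]
    field_simp
    ring
  have hlog : Real.log ((1+s)/(1-s)) = 2*L - X := by
    rw [hratio, Real.log_div (by positivity) (ne_of_gt hl0), Real.log_pow, ← hL_def, ← hX_def]
    push_cast; ring
  -- log Taylor bound
  have hLb : |L + t + t^2/2| ≤ 2*t^3 := by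
    have h := Real.abs_log_sub_add_sum_range_le (show |t| < 1 by rw [abs_of_pos ht0]; linarith) 2
    rw [abs_of_pos ht0] at h
    simp only [Finset.sum_range_succ, Finset.sum_range_zero] at h
    have hdiv : t^3/(1-t) ≤ 2*t^3 := by
      rw [div_le_iff₀ h1t]; nlinarith
    have habs := abs_le.mp h
    rw [abs_le]
    constructor <;> push_cast at habs <;> [nlinarith [habs.1, habs.2]; nlinarith [habs.1, habs.2]]
  have hlt' : l = t - t^2 := by rw [hlt]; ring
  have hLl : |L + l| ≤ 8*l^2 := by
    have habs := abs_le.mp hLb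
    have ht2 : t^2 ≤ 4*l^2 := by nlinarith [ht2l, ht0]
    have ht3 : 2*t^3 ≤ 0.3*t^2 := by
      nlinarith [mul_nonneg (sq_nonneg t) (show (0:ℝ) ≤ 0.3 - 2*t by linarith)]
    have hl2 : (0:ℝ) ≤ l^2 := sq_nonneg l
    rw [abs_le]
    constructor <;> [linarith [habs.1]; linarith [habs.2]]
  -- bound A : |2L/s + 2l| ≤ 36 l^2
  have hA : |2*L/s + 2*l| ≤ 36*l^2 := by
    have hdecomp : 2*L/s + 2*l = (2/s)*((L + l) + (s-1)*l) := by field_simp; ring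
    have hsl : |(s-1)*l| ≤ 4*l^2 := by
      rw [abs_mul, abs_of_pos hl0, abs_of_nonpos (by linarith : s - 1 ≤ 0)]
      have : -(s-1) = 2*t := by rw [hseq]; ring
      rw [this]; nlinarith
    have h1 : |(L + l) + (s-1)*l| ≤ 12*l^2 := by
      calc |(L + l) + (s-1)*l| ≤ |L + l| + |(s-1)*l| := abs_add_le _ _
        _ ≤ 8*l^2 + 4*l^2 := add_le_add hLl hsl
        _ = 12*l^2 := by ring
    have h2s : (2:ℝ)/s ≤ 3 := by rw [div_le_iff₀ hs0]; linarith
    rw [hdecomp, abs_mul, abs_of_pos (by positivity : (0:ℝ) < 2/s)]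
    nlinarith [abs_nonneg ((L + l) + (s-1)*l)]
  -- bound B : |1/s - 1 - 2l| ≤ 14 l^2
  have hD : (1:ℝ) ≤ s*(1 + s*(1+2*l)) := by nlinarith
  have key : (1/s - 1 - 2*l) * (s*(1+s*(1+2*l))) = 12*l^2 + 16*l^3 := by
    have h1 : (1/s - 1 - 2*l) * s = 1 - s*(1+2*l) := by field_simp; ring
    rw [show (1/s - 1 - 2*l) * (s*(1+s*(1+2*l))) =
      ((1/s - 1 - 2*l) * s) * (1+s*(1+2*l)) from by ring, h1]
    linear_combination (-(1+2*l)^2) * hs2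
  have hBpos : 0 ≤ 1/s - 1 - 2*l := by
    nlinarith [key, hD, sq_nonneg l, mul_pos (mul_pos hl0 hl0) hl0]
  have hB : |1/s - 1 - 2*l| ≤ 14*l^2 := by
    rw [abs_of_nonneg hBpos]
    nlinarith [key, hD, mul_nonneg (mul_nonneg hl0.le hl0.le) (show (0:ℝ) ≤ 1/8 - l by linarith)]
  -- log l ≤ -2
  have hexp2 : Real.exp 2 ≤ 8 := by
    have h1 : Real.exp 2 = Real.exp 1 * Real.exp 1 := by
      rw [← Real.exp_add]; norm_num
    nlinarith [Real.exp_one_lt_d9, Real.exp_pos 1]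
  have hX2 : X ≤ -2 := by
    rw [hX_def, show (-2:ℝ) = Real.log (Real.exp (-2)) from (Real.log_exp _).symm]
    apply Real.log_le_log hl0
    rw [Real.exp_neg]
    have h2 : (8:ℝ)⁻¹ ≤ (Real.exp 2)⁻¹ := by
      apply inv_anti₀ (Real.exp_pos 2) hexp2
    calc l ≤ 1/8 := hl8'
      _ = (8:ℝ)⁻¹ := by norm_num
      _ ≤ (Real.exp 2)⁻¹ := h2
  -- main rewrite
  have hrw : 1 / 2 - (1 / 2 - l / s * Real.log ((1 + s) / (1 - s))) -
      (-l * X - 2 * l ^ 2 * (1 + X)) = l*(2*L/s + 2*l) - X*(l*(1/s - 1 - 2*l)) := by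
    rw [hlog]; field_simp; ring
  rw [Real.norm_eq_abs, Real.norm_eq_abs, hrw]
  have habsX : |X| = -X := abs_of_neg (by linarith)
  have hXmul : |l^3 * X| = l^3 * (-X) := by
    rw [abs_mul, abs_of_pos (by positivity : (0:ℝ) < l^3), habsX]
  calc |l*(2*L/s + 2*l) - X*(l*(1/s - 1 - 2*l))|
      ≤ |l*(2*L/s + 2*l)| + |X*(l*(1/s - 1 - 2*l))| := abs_sub _ _
    _ = l*|2*L/s + 2*l| + (-X)*(l*|1/s - 1 - 2*l|) := by
        rw [abs_mul, abs_mul, abs_mul, abs_of_pos hl0, habsX]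
    _ ≤ l*(36*l^2) + (-X)*(l*(14*l^2)) := by
        have hXpos : (0:ℝ) ≤ -X := by linarith
        gcongr
    _ ≤ 50 * |l^3 * X| := by
        rw [hXmul]
        nlinarith [pow_pos hl0 3]
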